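/- Let G be a finitely generated group with a (K,C)-quasi-action A on a simplicial tree T, and fix x ∈ T. Then there exists R₀ such that for every R ≥ R₀ the set S = {s ∈ G : d(A(s,x), x) ≤ R} satisfies: (i) S generates G; and (ii) there exist K' ≥ 1 and C' ≥ 0 such that for all g, h ∈ G, (1/K')·d_S(g,h) − C' ≤ d(A(g,x), A(h,x)) ≤ K'·d_S(g,h) + C', i.e. the orbit map g ↦ A(g,x) is a quasi-isometric embedding of G with the word metric d_S into T. -/

import Mathlib

open SimpleGraph

noncomputable def tpath {V : Type} {T : SimpleGraph V} (hT : T.IsTree) (a b : V) : T.Walk a b :=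
  (hT.existsUnique_path a b).exists.choose

lemma tpath_isPath {V : Type} {T : SimpleGraph V} (hT : T.IsTree) (a b : V) :
    (tpath hT a b).IsPath :=
  (hT.existsUnique_path a b).exists.choose_spec

lemma tree_path_unique {V : Type} {T : SimpleGraph V} (hT : T.IsTree) {a b : V}
    {w w' : T.Walk a b} (h : w.IsPath) (h' : w'.IsPath) : w = w' :=
  (hT.existsUnique_path a b).unique h h'

lemma tree_path_length {V : Type} {T : SimpleGraph V} (hT : T.IsTree) {a b : V}
    (w : T.Walk a b) (hw : w.IsPath) : w.length = T.dist a b := by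
  classical
  obtain ⟨q, hq⟩ := hT.isConnected.exists_walk_length_eq_dist a b
  have hwq : w = q.bypass := tree_path_unique hT hw q.bypass_isPath
  have h1 : T.dist a b ≤ w.length := SimpleGraph.dist_le w
  have h2 : w.length ≤ q.length := hwq ▸ q.length_bypass_le
  omega

lemma chain_lemma {V : Type} {T : SimpleGraph V} (hT : T.IsTree) (D : ℝ) (hD : 0 ≤ D)
    (y : ℕ → V) (hy : ∀ j, (T.dist (y j) (y (j+1)) : ℝ) ≤ D) :
    ∀ m p, p ∈ (tpath hT (y 0) (y m)).support → ∃ j, (T.dist (y j) p : ℝ) ≤ D := by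
  classical
  intro m
  induction m with
  | zero =>
    intro p hp
    refine ⟨0, ?_⟩
    have h1 : T.dist (y 0) p ≤ ((tpath hT (y 0) (y 0)).takeUntil p hp).length :=
      SimpleGraph.dist_le _
    have h2 := SimpleGraph.Walk.length_takeUntil_le (tpath hT (y 0) (y 0)) hp
    have h3 : (tpath hT (y 0) (y 0)).length = 0 := by
      rw [tree_path_length hT _ (tpath_isPath hT _ _), SimpleGraph.dist_self]
    have : T.dist (y 0) p = 0 := by omega
    rw [this]
    simpa using hD
  | succ m ih =>
    intro p hp
    have hbp : ((tpath hT (y 0) (y m)).append (tpath hT (y m) (y (m+1)))).bypass.IsPath :=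
      SimpleGraph.Walk.bypass_isPath _
    have heq : tpath hT (y 0) (y (m+1)) =
        ((tpath hT (y 0) (y m)).append (tpath hT (y m) (y (m+1)))).bypass :=
      tree_path_unique hT (tpath_isPath hT _ _) hbp
    rw [heq] at hp
    have hp2 := SimpleGraph.Walk.support_bypass_subset _ hp
    rw [SimpleGraph.Walk.mem_support_append_iff] at hp2
    rcases hp2 with h | h
    · exact ih p h
    · refine ⟨m, ?_⟩
      have h1 : T.dist (y m) p ≤ ((tpath hT (y m) (y (m+1))).takeUntil p h).length :=
        SimpleGraph.dist_le _
      have h2 := SimpleGraph.Walk.length_takeUntil_le (tpath hT (y m) (y (m+1))) h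
      have h3 : (tpath hT (y m) (y (m+1))).length = T.dist (y m) (y (m+1)) :=
        tree_path_length hT _ (tpath_isPath hT _ _)
      have h4 : T.dist (y m) p ≤ T.dist (y m) (y (m+1)) := by omega
      calc (T.dist (y m) p : ℝ) ≤ (T.dist (y m) (y (m+1)) : ℝ) := by exact_mod_cast h4
        _ ≤ D := hy m

lemma exists_list_of_mem_closure' {G : Type} [Group G] (S : Set G) (z : G)
    (hz : z ∈ Subgroup.closure S) :
    ∃ l : List G, (∀ y ∈ l, y ∈ S ∨ y⁻¹ ∈ S) ∧ l.prod = z := by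
  have h : z ∈ (Subgroup.closure S).toSubmonoid := hz
  rw [Subgroup.closure_toSubmonoid] at h
  obtain ⟨l, hl, hp⟩ := Submonoid.exists_list_of_mem_closure h
  refine ⟨l, fun y hy => ?_, hp⟩
  rcases hl y hy with h' | h'
  · exact Or.inl h'
  · exact Or.inr (Set.mem_inv.mp h')


/-- Word metric associated to a subset `S` of a group `G`: `wordDist S g h` is the least
`k` such that `g⁻¹ * h` is a product of `k` elements of `S ∪ S⁻¹`. -/
noncomputable def wordDist {G : Type} [Group G] (S : Set G) (g h : G) : ℕ :=
  sInf {k : ℕ | ∃ l : List G, l.length = k ∧ (∀ x ∈ l, x ∈ S ∨ x⁻¹ ∈ S) ∧ g⁻¹ * h = l.prod}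

/-- from a quasi-action of a finitely generated group on a simplicial tree
one obtains, for all sufficiently large `R`, a generating set `S` of elements moving the
basepoint at most `R`, such that the orbit map is a quasi-isometric embedding of
`(G, d_S)` into the tree. -/
theorem stmt_4 (G : Type) [Group G] (hFG : Group.FG G)
    (V : Type) (T : SimpleGraph V) (hT : T.IsTree)
    (K C : ℝ) (hK : 1 ≤ K) (hC : 0 ≤ C)
    (A : G → V → V)
    -- each A(g,−) is a (K,C)-quasi-isometry of the tree
    (hQI : ∀ g : G,
      (∀ u v : V, (T.dist u v : ℝ) / K - C ≤ (T.dist (A g u) (A g v) : ℝ) ∧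
        (T.dist (A g u) (A g v) : ℝ) ≤ K * (T.dist u v : ℝ) + C) ∧
      ∀ v : V, ∃ u : V, (T.dist v (A g u) : ℝ) ≤ C)
    -- quasi-action cocycle condition
    (hcoc : ∀ g h : G, ∀ u : V, (T.dist (A g (A h u)) (A (g * h) u) : ℝ) ≤ C)
    (x : V) :
    ∃ R₀ : ℝ, ∀ R : ℝ, R₀ ≤ R →
      (Subgroup.closure {s : G | (T.dist (A s x) x : ℝ) ≤ R} = ⊤) ∧
      ∃ K' C' : ℝ, 1 ≤ K' ∧ 0 ≤ C' ∧
        ∀ g h : G,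
          (wordDist {s : G | (T.dist (A s x) x : ℝ) ≤ R} g h : ℝ) / K' - C'
              ≤ (T.dist (A g x) (A h x) : ℝ) ∧
          (T.dist (A g x) (A h x) : ℝ)
              ≤ K' * (wordDist {s : G | (T.dist (A s x) x : ℝ) ≤ R} g h : ℝ) + C' := by
  classical
  have hK0 : (0:ℝ) < K := lt_of_lt_of_le one_pos hK
  have tri : ∀ a b c : V, (T.dist a c : ℝ) ≤ T.dist a b + T.dist b c := by
    intro a b c
    exact_mod_cast hT.isConnected.dist_triangle (u := a) (v := b) (w := c)
  have dcomm : ∀ a b : V, (T.dist a b : ℝ) = T.dist b a := by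
    intro a b
    exact_mod_cast Nat.cast_inj.mpr (SimpleGraph.dist_comm)
  -- basic estimates
  have hA1 : (T.dist (A 1 x) x : ℝ) ≤ 2*K*C := by
    have h1 := hcoc 1 1 x
    rw [one_mul] at h1
    have h2 := ((hQI 1).1 (A 1 x) x).1
    have h3 : (T.dist (A 1 x) x : ℝ) / K ≤ 2 * C := by linarith
    have h4 := (div_le_iff₀ hK0).mp h3
    nlinarith
  have hmove : ∀ g s : G, (T.dist (A (g*s) x) (A g x) : ℝ) ≤ K * (T.dist (A s x) x : ℝ) + 2*C := by
    intro g s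
    have h1 := hcoc g s x
    have h2 := ((hQI g).1 (A s x) x).2
    have t1 := tri (A (g*s) x) (A g (A s x)) (A g x)
    have c1 := dcomm (A (g*s) x) (A g (A s x))
    linarith
  have hinv : ∀ s : G, (T.dist (A s⁻¹ x) x : ℝ) ≤ K * (T.dist (A s x) x : ℝ) + 2*C + 2*K*C := by
    intro s
    have h1 := ((hQI s⁻¹).1 x (A s x)).2
    have h2 := hcoc s⁻¹ s x
    rw [inv_mul_cancel] at h2
    have t1 := tri (A s⁻¹ x) (A s⁻¹ (A s x)) x
    have t2 := tri (A s⁻¹ (A s x)) (A 1 x) x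
    have c1 := dcomm x (A s x)
    rw [c1] at h1
    linarith
  have hpull : ∀ g h : G,
      (T.dist (A (g⁻¹*h) x) x : ℝ) ≤ K * (T.dist (A g x) (A h x) : ℝ) + 3*C + 2*K*C := by
    intro g h
    have h1 := hcoc g⁻¹ h x
    have h2 := ((hQI g⁻¹).1 (A h x) (A g x)).2
    have h3 := hcoc g⁻¹ g x
    rw [inv_mul_cancel] at h3
    have t1 := tri (A (g⁻¹*h) x) (A g⁻¹ (A h x)) x
    have t2 := tri (A g⁻¹ (A h x)) (A g⁻¹ (A g x)) x
    have t3 := tri (A g⁻¹ (A g x)) (A 1 x) x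
    have c1 := dcomm (A (g⁻¹*h) x) (A g⁻¹ (A h x))
    have c2 := dcomm (A h x) (A g x)
    rw [c2] at h2
    rw [c1] at t1
    linarith
  -- finite generating set and its bound
  obtain ⟨S₀, hS₀c, hS₀f⟩ := Group.fg_iff.mp hFG
  obtain ⟨M, hM0, hMb⟩ : ∃ M : ℝ, 0 ≤ M ∧
      ∀ s ∈ S₀, (T.dist (A s x) x : ℝ) ≤ M ∧ (T.dist (A s⁻¹ x) x : ℝ) ≤ M := by
    refine ⟨((hS₀f.toFinset.sup (fun s => max (T.dist (A s x) x) (T.dist (A s⁻¹ x) x)) : ℕ) : ℝ),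
      Nat.cast_nonneg _, ?_⟩
    intro s hs
    have h1 : max (T.dist (A s x) x) (T.dist (A s⁻¹ x) x) ≤
        hS₀f.toFinset.sup (fun s => max (T.dist (A s x) x) (T.dist (A s⁻¹ x) x)) :=
      Finset.le_sup (f := fun s => max (T.dist (A s x) x) (T.dist (A s⁻¹ x) x))
        (hS₀f.mem_toFinset.mpr hs)
    constructor
    · exact_mod_cast le_trans (le_max_left _ _) h1
    · exact_mod_cast le_trans (le_max_right _ _) h1
  obtain ⟨D1, hD1def⟩ : ∃ d : ℝ, d = K * M + 2 * C := ⟨_, rfl⟩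
  have hD1nn : 0 ≤ D1 := by rw [hD1def]; nlinarith
  obtain ⟨R0, hR0def⟩ : ∃ r : ℝ, r = K * (2 * D1 + 1) + 3 * C + 2 * K * C := ⟨_, rfl⟩
  have hR0nn : 0 ≤ R0 := by rw [hR0def]; nlinarith
  have hMR0 : M ≤ R0 := by rw [hR0def, hD1def]; nlinarith
  refine ⟨R0, ?_⟩
  intro R hR
  have hRnn : 0 ≤ R := le_trans hR0nn hR
  obtain ⟨SS, hSSdef⟩ : ∃ S : Set G, S = {s : G | (T.dist (A s x) x : ℝ) ≤ R} := ⟨_, rfl⟩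
  rw [← hSSdef]
  have hmemSS : ∀ s : G, s ∈ SS ↔ (T.dist (A s x) x : ℝ) ≤ R := by
    intro s; rw [hSSdef]; exact Iff.rfl
  have hgen : Subgroup.closure SS = ⊤ := by
    rw [eq_top_iff, ← hS₀c]
    apply Subgroup.closure_mono
    intro s hs
    rw [hmemSS]
    exact le_trans (hMb s hs).1 (le_trans hMR0 hR)
  refine ⟨hgen, ?_⟩
  obtain ⟨R', hR'def⟩ : ∃ r : ℝ, r = K * R + 2*C + 2*K*C := ⟨_, rfl⟩
  have hR'nn : 0 ≤ R' := by rw [hR'def]; nlinarith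
  have hRR' : R ≤ R' := by rw [hR'def]; nlinarith
  have hsb : ∀ s : G, (s ∈ SS ∨ s⁻¹ ∈ SS) → (T.dist (A s x) x : ℝ) ≤ R' := by
    intro s hs
    rcases hs with h | h
    · exact le_trans ((hmemSS s).mp h) hRR'
    · have h2 := hinv s⁻¹
      rw [inv_inv] at h2
      have h3 : (T.dist (A s⁻¹ x) x : ℝ) ≤ R := (hmemSS _).mp h
      rw [hR'def]
      nlinarith
  have hup : ∀ l : List G, (∀ s ∈ l, s ∈ SS ∨ s⁻¹ ∈ SS) → ∀ g : G,
      (T.dist (A g x) (A (g * l.prod) x) : ℝ) ≤ (K * R' + 2*C) * l.length := by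
    intro l
    induction l with
    | nil =>
      intro _ g
      simp [SimpleGraph.dist_self]
    | cons s t ih =>
      intro hmem g
      have hs := hsb s (hmem s (List.mem_cons_self))
      have ih2 := ih (fun y hy => hmem y (List.mem_cons_of_mem s hy)) (g * s)
      have h1 := hmove g s
      have htri := tri (A g x) (A (g*s) x) (A ((g*s) * t.prod) x)
      have hassoc : g * (s :: t).prod = (g * s) * t.prod := by
        rw [List.prod_cons, mul_assoc]
      rw [hassoc]
      have c1 := dcomm (A (g*s) x) (A g x)
      have hlen : ((s :: t).length : ℝ) = (t.length : ℝ) + 1 := by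
        push_cast [List.length_cons]; ring
      rw [hlen]
      have hnn : (0:ℝ) ≤ (t.length : ℝ) := Nat.cast_nonneg _
      nlinarith
  refine ⟨K * R' + 2*C + 1, 1, by nlinarith, by norm_num, ?_⟩
  intro g h
  constructor
  · -- lower bound: wordDist ≤ dist + 1
    obtain ⟨l₀, hl₀mem, hl₀prod⟩ := exists_list_of_mem_closure' S₀ (g⁻¹*h)
      (by rw [hS₀c]; trivial)
    obtain ⟨m, hm⟩ : ∃ m : ℕ, m = l₀.length := ⟨_, rfl⟩
    obtain ⟨u, hu⟩ : ∃ u : ℕ → G, ∀ j, u j = g * (l₀.take j).prod := ⟨_, fun _ => rfl⟩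
    obtain ⟨y, hy⟩ : ∃ y : ℕ → V, ∀ j, y j = A (u j) x := ⟨_, fun _ => rfl⟩
    have hu0 : u 0 = g := by rw [hu]; simp
    have hum : ∀ j, m ≤ j → u j = h := by
      intro j hj
      rw [hu, List.take_of_length_le (by omega), hl₀prod, mul_inv_cancel_left]
    have hstep : ∀ j, (T.dist (y j) (y (j+1)) : ℝ) ≤ D1 := by
      intro j
      by_cases hj : j < m
      · have hj2 : j < l₀.length := by omega
        have hsucc : u (j+1) = u j * l₀.get ⟨j, hj2⟩ := by
          rw [hu, hu, List.prod_take_succ l₀ j hj2, mul_assoc]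
          rfl
        have hgm : l₀.get ⟨j, hj2⟩ ∈ l₀ := List.get_mem _ _
        have hsd : (T.dist (A (l₀.get ⟨j, hj2⟩) x) x : ℝ) ≤ M := by
          rcases hl₀mem _ hgm with h' | h'
          · exact (hMb _ h').1
          · have := (hMb _ h').2
            rwa [inv_inv] at this
        have hmv := hmove (u j) (l₀.get ⟨j, hj2⟩)
        rw [← hsucc] at hmv
        have hmul := mul_le_mul_of_nonneg_left hsd (le_of_lt hK0)
        rw [hy, hy, dcomm, hD1def]
        linarith
      · have heq : u (j+1) = u j := by
          rw [hum j (not_lt.mp hj), hum (j+1) (by omega)]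
        rw [hy, hy, heq]
        simpa [SimpleGraph.dist_self] using hD1nn
    have hym : y m = A h x := by rw [hy, hum m le_rfl]
    have hy0 : y 0 = A g x := by rw [hy, hu0]
    set P := tpath hT (y 0) (y m) with hP
    obtain ⟨n, hn⟩ : ∃ n : ℕ, n = T.dist (A g x) (A h x) := ⟨_, rfl⟩
    have hPlen : P.length = n := by
      rw [hP, tree_path_length hT _ (tpath_isPath hT _ _), hy0, hym, hn]
    have hget : ∀ a, P.getVert a ∈ P.support := by
      intro a
      by_cases ha : a ≤ P.length
      · exact SimpleGraph.Walk.mem_support_iff_exists_getVert.mpr ⟨a, rfl, ha⟩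
      · rw [SimpleGraph.Walk.getVert_of_length_le P (by omega)]
        exact SimpleGraph.Walk.end_mem_support _
    have hsel : ∀ a, ∃ j, (T.dist (y j) (P.getVert a) : ℝ) ≤ D1 :=
      fun a => chain_lemma hT D1 hD1nn y hstep m (P.getVert a) (hget a)
    choose jj hjj using hsel
    obtain ⟨c, hc⟩ : ∃ c : ℕ → G,
        ∀ a, c a = if a = 0 then g else if n < a then h else u (jj a) := ⟨_, fun _ => rfl⟩
    have hc0 : c 0 = g := by rw [hc]; simp
    have hcn : c (n+1) = h := by rw [hc]; simp [Nat.lt_succ_self]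
    have hcP : ∀ a, (T.dist (A (c a) x) (P.getVert a) : ℝ) ≤ D1 := by
      intro a
      rcases eq_or_ne a 0 with rfl | ha0
      · have : P.getVert 0 = A g x := by rw [SimpleGraph.Walk.getVert_zero, hy0]
        rw [this]
        have : c 0 = g := hc0
        rw [this]
        simpa [SimpleGraph.dist_self] using hD1nn
      · by_cases han : n < a
        · have hca : c a = h := by rw [hc]; simp [ha0, han]
          have : P.getVert a = A h x := by
            rw [SimpleGraph.Walk.getVert_of_length_le P (by omega : P.length ≤ a), hym]
          rw [hca, this]
          simpa [SimpleGraph.dist_self] using hD1nn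
        · have hca : c a = u (jj a) := by rw [hc]; simp [ha0, han]
          rw [hca, ← hy]
          exact hjj a
    have hgv1 : ∀ a, (T.dist (P.getVert a) (P.getVert (a+1)) : ℝ) ≤ 1 := by
      intro a
      by_cases ha : a < P.length
      · have hadj := P.adj_getVert_succ ha
        have hlen : (hadj.toWalk).length = 1 := rfl
        have := SimpleGraph.dist_le hadj.toWalk
        rw [hlen] at this
        exact_mod_cast this
      · rw [SimpleGraph.Walk.getVert_of_length_le P (not_lt.mp ha),
          SimpleGraph.Walk.getVert_of_length_le P (by omega)]
        simp [SimpleGraph.dist_self]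
    have hkey : ∀ a, (T.dist (A (c a) x) (A (c (a+1)) x) : ℝ) ≤ 2*D1 + 1 := by
      intro a
      have t1 := tri (A (c a) x) (P.getVert a) (A (c (a+1)) x)
      have t2 := tri (P.getVert a) (P.getVert (a+1)) (A (c (a+1)) x)
      have h1 := hcP a
      have h2 := hcP (a+1)
      have h3 := hgv1 a
      have c1 := dcomm (A (c (a+1)) x) (P.getVert (a+1))
      linarith
    have hmemS : ∀ a, ((c a)⁻¹ * c (a+1)) ∈ SS := by
      intro a
      have hp := hpull (c a) (c (a+1))
      have hk := hkey a
      rw [hmemSS]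
      have hmul := mul_le_mul_of_nonneg_left hk (le_of_lt hK0)
      rw [hR0def] at hR
      linarith
    have tel : ∀ k : ℕ, ((List.range k).map (fun a => (c a)⁻¹ * c (a+1))).prod
        = (c 0)⁻¹ * c k := by
      intro k
      induction k with
      | zero => simp
      | succ k ih =>
        rw [List.range_succ, List.map_append, List.prod_append, ih]
        simp [mul_assoc]
    have hwdle : wordDist SS g h ≤ n + 1 := by
      apply Nat.sInf_le
      refine ⟨(List.range (n+1)).map (fun a => (c a)⁻¹ * c (a+1)), by simp, ?_, ?_⟩
      · intro s hs
        obtain ⟨a, _, rfl⟩ := List.mem_map.mp hs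
        exact Or.inl (hmemS a)
      · rw [tel (n+1), hc0, hcn]
    have hwd : (wordDist SS g h : ℝ) ≤ (n : ℝ) + 1 := by exact_mod_cast hwdle
    have hdivle : (wordDist SS g h : ℝ) / (K * R' + 2*C + 1) ≤ (wordDist SS g h : ℝ) :=
      div_le_self (Nat.cast_nonneg _) (by nlinarith)
    rw [← hn]
    linarith
  · -- upper bound
    obtain ⟨l, hlmem, hlprod⟩ := exists_list_of_mem_closure' SS (g⁻¹*h)
      (by rw [hgen]; trivial)
    have hne : {k : ℕ | ∃ l : List G, l.length = k ∧ (∀ x ∈ l, x ∈ SS ∨ x⁻¹ ∈ SS)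
        ∧ g⁻¹ * h = l.prod}.Nonempty := ⟨l.length, l, rfl, hlmem, hlprod.symm⟩
    have hwmem : wordDist SS g h ∈ {k : ℕ | ∃ l : List G, l.length = k ∧
        (∀ x ∈ l, x ∈ SS ∨ x⁻¹ ∈ SS) ∧ g⁻¹ * h = l.prod} := Nat.sInf_mem hne
    obtain ⟨l', hl'len, hl'mem, hl'prod⟩ := hwmem
    have hb := hup l' hl'mem g
    rw [← hl'prod, mul_inv_cancel_left] at hb
    rw [hl'len] at hb
    have hwnn : (0:ℝ) ≤ (wordDist SS g h : ℝ) := Nat.cast_nonneg _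
    nlinarith
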